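/- arXiv:1206.5393 — 4 statements merged into one kernel-verified Lean document; each statement's English description precedes it below -/
import Mathlib

section
/- With Φ as above (Φ(A) = log((1/d)∫_T^{T+d} ψ(s) e^{l(s)A} ds), l(s) = e^{-cs}, ψ > 0 continuous), the second derivative satisfies |Φ''(A)| ≤ e^{-2cT} - e^{-2c(T+d)} for all A ∈ ℝ. In particular Φ'' is bounded. -/
open Real MeasureTheory

private lemma hasDerivAt_int_aux (c T d : ℝ) (g : ℝ → ℝ)
    (hg : ContinuousOn g (Set.Icc T (T + d))) (A : ℝ) :
    HasDerivAt (fun x => ∫ s in Set.Icc T (T + d), g s * Real.exp (Real.exp (-c * s) * x))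
      (∫ s in Set.Icc T (T + d),
        (Real.exp (-c * s) * g s) * Real.exp (Real.exp (-c * s) * A)) A := by
  set S := Set.Icc T (T + d) with hS
  have hco := isCompact_Icc (a := T) (b := T + d)
  have hlcont : Continuous fun s : ℝ => Real.exp (-c * s) :=
    (Real.continuous_exp.comp (continuous_const.mul continuous_id))
  -- bound for exp(-c*s) on S
  obtain ⟨M₀, hM₀⟩ := hco.exists_bound_of_continuousOn hlcont.continuousOn
  set M := max M₀ 0 with hMdef
  have hM : ∀ s ∈ S, Real.exp (-c * s) ≤ M := by
    intro s hs
    have h := hM₀ s hs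
    rw [Real.norm_eq_abs] at h
    exact (le_abs_self _).trans (h.trans (le_max_left _ _))
  have hMpos : (0 : ℝ) ≤ M := le_max_right _ _
  have key := hasDerivAt_integral_of_dominated_loc_of_deriv_le
      (F := fun x s => g s * Real.exp (Real.exp (-c * s) * x))
      (F' := fun x s => (Real.exp (-c * s) * g s) * Real.exp (Real.exp (-c * s) * x))
      (x₀ := A) (μ := volume.restrict S)
      (bound := fun s => M * |g s| * Real.exp (M * (|A| + 1)))
      (s := Metric.ball A 1) (Metric.ball_mem_nhds A one_pos) ?_ ?_ ?_ ?_ ?_ ?_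
  · exact key.2
  · refine Filter.Eventually.of_forall fun x => ?_
    exact ((hg.mul ((Real.continuous_exp.comp (hlcont.mul continuous_const)).continuousOn)
      ).aestronglyMeasurable measurableSet_Icc)
  · exact (hg.mul ((Real.continuous_exp.comp
      (hlcont.mul continuous_const)).continuousOn)).integrableOn_Icc
  · exact (((hlcont.continuousOn.mul hg).mul ((Real.continuous_exp.comp
      (hlcont.mul continuous_const)).continuousOn)).aestronglyMeasurable measurableSet_Icc)
  · rw [MeasureTheory.ae_restrict_iff' measurableSet_Icc]
    refine Filter.Eventually.of_forall fun s hs => fun x hx => ?_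
    have hls : 0 < Real.exp (-c * s) := Real.exp_pos _
    have hlM : Real.exp (-c * s) ≤ M := hM s hs
    have hxA : |x| ≤ |A| + 1 := by
      have := abs_sub_abs_le_abs_sub x A
      have hb : |x - A| < 1 := by simpa [Metric.mem_ball, Real.dist_eq] using hx
      linarith
    have hexp : Real.exp (Real.exp (-c * s) * x) ≤ Real.exp (M * (|A| + 1)) := by
      apply Real.exp_le_exp.2
      calc Real.exp (-c * s) * x ≤ |Real.exp (-c * s) * x| := le_abs_self _
        _ = Real.exp (-c * s) * |x| := by rw [abs_mul, abs_of_pos hls]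
        _ ≤ M * (|A| + 1) := by
            apply mul_le_mul hlM hxA (abs_nonneg _) hMpos
    rw [norm_mul, norm_mul, Real.norm_eq_abs, Real.norm_eq_abs, Real.norm_eq_abs,
      abs_of_pos hls, Real.abs_exp]
    exact mul_le_mul (mul_le_mul_of_nonneg_right hlM (abs_nonneg _)) hexp
      (Real.exp_pos _).le (by positivity)
  · exact ((continuousOn_const.mul hg.abs).mul continuousOn_const).integrableOn_Icc
  · refine Filter.Eventually.of_forall fun s => fun x _ => ?_
    have h1 : HasDerivAt (fun y : ℝ => Real.exp (-c * s) * y) (Real.exp (-c * s)) x := by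
      simpa using (hasDerivAt_id x).const_mul (Real.exp (-c * s))
    have h2 := (Real.hasDerivAt_exp (Real.exp (-c * s) * x)).comp x h1
    have h3 := h2.const_mul (g s)
    refine h3.congr_deriv ?_
    ring

private lemma setIntegral_Icc_pos (T d : ℝ) (hd : 0 < d) (f : ℝ → ℝ)
    (hf : ContinuousOn f (Set.Icc T (T + d)))
    (hfpos : ∀ s ∈ Set.Icc T (T + d), 0 < f s) :
    0 < ∫ s in Set.Icc T (T + d), f s := by
  have hle : T ≤ T + d := by linarith
  rw [MeasureTheory.integral_Icc_eq_integral_Ioc, ← intervalIntegral.integral_of_le hle]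
  apply intervalIntegral.intervalIntegral_pos_of_pos_on
  · apply ContinuousOn.intervalIntegrable; rwa [Set.uIcc_of_le hle]
  · intro x hx; exact hfpos x ⟨hx.1.le, hx.2.le⟩
  · linarith

/-- The second derivative of the log-forward-curve functional Φ is bounded:
`|Φ''(A)| ≤ e^{-2cT} - e^{-2c(T+d)}`. -/
theorem Phi_second_deriv_bound
    (c T d : ℝ) (hc : 0 < c) (hT : 0 < T) (hd : 0 < d)
    (ψ : ℝ → ℝ) (hψcont : ContinuousOn ψ (Set.Icc T (T + d)))
    (hψpos : ∀ s ∈ Set.Icc T (T + d), 0 < ψ s)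
    (Φ : ℝ → ℝ)
    (hΦ : ∀ A : ℝ, Φ A =
      Real.log ((1 / d) * ∫ s in Set.Icc T (T + d), ψ s * Real.exp (Real.exp (-c * s) * A))) :
    ∀ A : ℝ, |deriv (deriv Φ) A| ≤ Real.exp (-2 * c * T) - Real.exp (-2 * c * (T + d)) := by
  intro A
  have hTd : T ≤ T + d := by linarith
  set m := Real.exp (-c * (T + d)) with hmdef
  set M := Real.exp (-c * T) with hMdef
  have hm0 : 0 < m := Real.exp_pos _
  set F : ℝ → ℝ := fun x => ∫ s in Set.Icc T (T + d),
    ψ s * Real.exp (Real.exp (-c * s) * x) with hFdef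
  set G : ℝ → ℝ := fun x => ∫ s in Set.Icc T (T + d),
    (Real.exp (-c * s) * ψ s) * Real.exp (Real.exp (-c * s) * x) with hGdef
  set H : ℝ → ℝ := fun x => ∫ s in Set.Icc T (T + d),
    (Real.exp (-c * s) * (Real.exp (-c * s) * ψ s)) * Real.exp (Real.exp (-c * s) * x)
    with hHdef
  have hlc : Continuous fun s : ℝ => Real.exp (-c * s) := by fun_prop
  have hexc : ∀ x : ℝ, Continuous fun s : ℝ => Real.exp (Real.exp (-c * s) * x) := by
    intro x; fun_prop
  have hlψ : ContinuousOn (fun s => Real.exp (-c * s) * ψ s) (Set.Icc T (T + d)) :=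
    hlc.continuousOn.mul hψcont
  have hF : ∀ x, HasDerivAt F (G x) x := fun x => hasDerivAt_int_aux c T d ψ hψcont x
  have hG : ∀ x, HasDerivAt G (H x) x := fun x =>
    hasDerivAt_int_aux c T d (fun s => Real.exp (-c * s) * ψ s) hlψ x
  have hFpos : ∀ x, 0 < F x := by
    intro x
    apply setIntegral_Icc_pos T d hd _ (hψcont.mul (hexc x).continuousOn)
    intro s hs
    exact mul_pos (hψpos s hs) (Real.exp_pos _)
  -- pointwise bounds on the exponential weight
  have hms : ∀ s ∈ Set.Icc T (T + d), m ≤ Real.exp (-c * s) ∧ Real.exp (-c * s) ≤ M := by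
    intro s hs
    constructor
    · apply Real.exp_le_exp.2; nlinarith [hs.2]
    · apply Real.exp_le_exp.2; nlinarith [hs.1]
  -- integrability of all integrands
  have hintF : ∀ x, IntegrableOn (fun s => ψ s * Real.exp (Real.exp (-c * s) * x))
      (Set.Icc T (T + d)) := fun x =>
    (hψcont.mul (hexc x).continuousOn).integrableOn_Icc
  have hintG : ∀ x, IntegrableOn
      (fun s => (Real.exp (-c * s) * ψ s) * Real.exp (Real.exp (-c * s) * x))
      (Set.Icc T (T + d)) := fun x => (hlψ.mul (hexc x).continuousOn).integrableOn_Icc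
  have hintH : ∀ x, IntegrableOn
      (fun s => (Real.exp (-c * s) * (Real.exp (-c * s) * ψ s)) *
        Real.exp (Real.exp (-c * s) * x)) (Set.Icc T (T + d)) := fun x =>
    ((hlc.continuousOn.mul hlψ).mul (hexc x).continuousOn).integrableOn_Icc
  -- comparisons
  have hGle : G A ≤ M * F A := by
    rw [hFdef, hGdef, ← MeasureTheory.integral_const_mul]
    apply setIntegral_mono_on (hintG A) ((hintF A).const_mul M) measurableSet_Icc
    intro s hs
    have h1 := (hms s hs).2
    have h2 := (hψpos s hs)
    have h3 := Real.exp_pos (Real.exp (-c * s) * A)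
    nlinarith [mul_le_mul_of_nonneg_right h1 (mul_pos h2 h3).le]
  have hGge : m * F A ≤ G A := by
    rw [hFdef, hGdef, ← MeasureTheory.integral_const_mul]
    apply setIntegral_mono_on ((hintF A).const_mul m) (hintG A) measurableSet_Icc
    intro s hs
    have h1 := (hms s hs).1
    have h2 := (hψpos s hs)
    have h3 := Real.exp_pos (Real.exp (-c * s) * A)
    nlinarith [mul_le_mul_of_nonneg_right h1 (mul_pos h2 h3).le]
  have hHle : H A ≤ M * (M * F A) := by
    rw [hFdef, hHdef, ← MeasureTheory.integral_const_mul, ← MeasureTheory.integral_const_mul]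
    apply setIntegral_mono_on (hintH A) (((hintF A).const_mul M).const_mul M) measurableSet_Icc
    intro s hs
    have h1 := (hms s hs).2
    have h2 := (hψpos s hs)
    have h3 := Real.exp_pos (Real.exp (-c * s) * A)
    have h4 := Real.exp_pos (-c * s)
    have hM0 : (0 : ℝ) ≤ M := le_trans h4.le h1
    have h5 : Real.exp (-c * s) * Real.exp (-c * s) ≤ M * M := mul_le_mul h1 h1 h4.le hM0
    nlinarith [mul_le_mul_of_nonneg_right h5 (mul_pos h2 h3).le]
  have hHge : m * (m * F A) ≤ H A := by
    rw [hFdef, hHdef, ← MeasureTheory.integral_const_mul, ← MeasureTheory.integral_const_mul]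
    apply setIntegral_mono_on (((hintF A).const_mul m).const_mul m) (hintH A) measurableSet_Icc
    intro s hs
    have h1 := (hms s hs).1
    have h2 := (hψpos s hs)
    have h3 := Real.exp_pos (Real.exp (-c * s) * A)
    have h4 := Real.exp_pos (-c * s)
    have h5 : m * m ≤ Real.exp (-c * s) * Real.exp (-c * s) := mul_le_mul h1 h1 hm0.le h4.le
    nlinarith [mul_le_mul_of_nonneg_right h5 (mul_pos h2 h3).le]
  -- first derivative
  have hΦderiv : deriv Φ = fun x => G x / F x := by
    funext x
    have hΦeq : Φ = fun y => Real.log ((1 / d) * F y) := by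
      funext y; exact hΦ y
    have hFd : HasDerivAt (fun y => (1 / d) * F y) ((1 / d) * G x) x := (hF x).const_mul _
    have hne : (1 / d) * F x ≠ 0 :=
      ne_of_gt (mul_pos (by positivity) (hFpos x))
    have hlog := hFd.log hne
    rw [hΦeq, hlog.deriv, mul_div_mul_left _ _ (by positivity : (1 : ℝ) / d ≠ 0)]
  -- second derivative
  have h2d : deriv (deriv Φ) A = (H A * F A - G A * G A) / (F A) ^ 2 := by
    rw [hΦderiv]
    exact ((hG A).div (hF A) (hFpos A).ne').deriv
  have eM : Real.exp (-2 * c * T) = M ^ 2 := by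
    rw [hMdef, sq, ← Real.exp_add]; congr 1; ring
  have em : Real.exp (-2 * c * (T + d)) = m ^ 2 := by
    rw [hmdef, sq, ← Real.exp_add]; congr 1; ring
  rw [h2d, eM, em, abs_div, abs_of_pos (pow_pos (hFpos A) 2),
    div_le_iff₀ (pow_pos (hFpos A) 2)]
  have hFA := hFpos A
  have hGpos : 0 < G A := lt_of_lt_of_le (mul_pos hm0 hFA) hGge
  have hMF0 : 0 ≤ M * F A := le_trans hGpos.le hGle
  apply abs_le.2
  constructor
  · nlinarith [mul_le_mul_of_nonneg_right hHge hFA.le,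
      mul_le_mul hGle hGle hGpos.le hMF0]
  · nlinarith [mul_le_mul_of_nonneg_right hHle hFA.le,
      mul_le_mul hGge hGge (mul_pos hm0 hFA).le hGpos.le]
end

section
/- With γ(t,z,y) as in the electricity futures model, the z-derivative satisfies |∂_z γ(t,z,y)| ≤ e^{cd} |y| for all t ∈ [0,T], z, y ∈ ℝ. In particular z ↦ γ(t,z,y) is Lipschitz with constant e^{cd}|y|. -/
open Real MeasureTheory

namespace GammaAux

variable {c T d : ℝ} {ψ : ℝ → ℝ}

/-- The parametric integrand family. -/
noncomputable def f (c : ℝ) (ψ : ℝ → ℝ) (k : ℕ) (x s : ℝ) : ℝ :=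
  ψ s * Real.exp (-c * s) ^ k * Real.exp (Real.exp (-c * s) * x)

/-- The parametric integrals (`F 0 = e^Φ · d` up to constants, etc.). -/
noncomputable def F (c T d : ℝ) (ψ : ℝ → ℝ) (k : ℕ) (x : ℝ) : ℝ :=
  ∫ s in Set.Icc T (T + d), f c ψ k x s

lemma f_cont (hψ : ContinuousOn ψ (Set.Icc T (T + d))) (k : ℕ) (x : ℝ) :
    ContinuousOn (f c ψ k x) (Set.Icc T (T + d)) := by
  apply (hψ.mul (Continuous.continuousOn (by continuity))).mul
  exact Continuous.continuousOn (by continuity)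

lemma f_integrable (hψ : ContinuousOn ψ (Set.Icc T (T + d))) (k : ℕ) (x : ℝ) :
    IntegrableOn (f c ψ k x) (Set.Icc T (T + d)) :=
  (f_cont hψ k x).integrableOn_compact isCompact_Icc

lemma f_pos (hψpos : ∀ s ∈ Set.Icc T (T + d), 0 < ψ s) (k : ℕ) (x : ℝ)
    {s : ℝ} (hs : s ∈ Set.Icc T (T + d)) : 0 < f c ψ k x s := by
  have h1 := hψpos s hs
  simp only [f]
  positivity

lemma F_pos (hd : 0 < d) (hψ : ContinuousOn ψ (Set.Icc T (T + d)))
    (hψpos : ∀ s ∈ Set.Icc T (T + d), 0 < ψ s) (k : ℕ) (x : ℝ) :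
    0 < F c T d ψ k x := by
  have hle : T ≤ T + d := by linarith
  have hint : IntervalIntegrable (f c ψ k x) volume T (T + d) := by
    apply IntegrableOn.intervalIntegrable
    rw [Set.uIcc_of_le hle]
    exact f_integrable hψ k x
  have : F c T d ψ k x = ∫ s in T..(T + d), f c ψ k x s := by
    rw [intervalIntegral.integral_of_le hle, F, MeasureTheory.integral_Icc_eq_integral_Ioc]
  rw [this]
  apply intervalIntegral.intervalIntegral_pos_of_pos_on hint
  · intro s hs
    exact f_pos hψpos k x (Set.mem_Icc_of_Ioo hs)
  · linarith


lemma f_succ (k : ℕ) (x s : ℝ) :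
    f c ψ (k + 1) x s = Real.exp (-c * s) * f c ψ k x s := by
  simp only [f, pow_succ]; ring

lemma F_hasDerivAt (hc : 0 < c) (hT : 0 < T) (hψ : ContinuousOn ψ (Set.Icc T (T + d)))
    (k : ℕ) (x₀ : ℝ) :
    HasDerivAt (F c T d ψ k) (F c T d ψ (k + 1) x₀) x₀ := by
  have hmeas : ∀ (j : ℕ) (x : ℝ),
      AEStronglyMeasurable (f c ψ j x) (volume.restrict (Set.Icc T (T + d))) := fun j x =>
    (f_cont hψ j x).aestronglyMeasurable measurableSet_Icc
  have key := hasDerivAt_integral_of_dominated_loc_of_deriv_le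
    (F := fun x s => f c ψ k x s) (F' := fun x s => f c ψ (k + 1) x s)
    (x₀ := x₀) (bound := fun s => |ψ s| * Real.exp (|x₀| + 1))
    (μ := volume.restrict (Set.Icc T (T + d))) (Metric.ball_mem_nhds x₀ one_pos)
    (Filter.Eventually.of_forall fun x => hmeas k x) (f_integrable hψ k x₀)
    (hmeas (k + 1) x₀) ?_ ?_ ?_
  · exact key.2
  · -- bound
    rw [MeasureTheory.ae_restrict_iff' measurableSet_Icc]
    apply Filter.Eventually.of_forall
    intro s hs x hx
    have hs0 : 0 < s := lt_of_lt_of_le hT hs.1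
    have hr1 : Real.exp (-c * s) ≤ 1 := by
      apply Real.exp_le_one_iff.2; nlinarith
    have hr0 : 0 < Real.exp (-c * s) := Real.exp_pos _
    have hxb : |x| ≤ |x₀| + 1 := by
      have := mem_ball_iff_norm.1 hx
      rw [Real.norm_eq_abs] at this
      calc |x| = |x₀ + (x - x₀)| := by ring_nf
        _ ≤ |x₀| + |x - x₀| := abs_add_le _ _
        _ ≤ |x₀| + 1 := by linarith
    have he : Real.exp (Real.exp (-c * s) * x) ≤ Real.exp (|x₀| + 1) := by
      apply Real.exp_le_exp.2
      calc Real.exp (-c * s) * x ≤ |Real.exp (-c * s) * x| := le_abs_self _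
        _ = Real.exp (-c * s) * |x| := by rw [abs_mul, abs_of_pos hr0]
        _ ≤ 1 * (|x₀| + 1) := by
            apply mul_le_mul hr1 hxb (abs_nonneg _) zero_le_one
        _ = |x₀| + 1 := one_mul _
    have hrk : Real.exp (-c * s) ^ (k + 1) ≤ 1 := pow_le_one₀ hr0.le hr1
    rw [Real.norm_eq_abs]
    show |ψ s * Real.exp (-c * s) ^ (k+1) * Real.exp (Real.exp (-c * s) * x)| ≤ _
    rw [abs_mul, abs_mul, abs_of_pos (Real.exp_pos _), abs_of_pos (pow_pos hr0 _)]
    calc |ψ s| * Real.exp (-c * s) ^ (k + 1) * Real.exp (Real.exp (-c * s) * x)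
        ≤ |ψ s| * 1 * Real.exp (|x₀| + 1) := by
          apply mul_le_mul _ he (Real.exp_pos _).le (by positivity)
          exact mul_le_mul_of_nonneg_left hrk (abs_nonneg _)
      _ = |ψ s| * Real.exp (|x₀| + 1) := by ring
  · -- bound integrable
    exact ((hψ.abs.mul continuousOn_const).integrableOn_compact isCompact_Icc)
  · -- differentiability
    apply Filter.Eventually.of_forall
    intro s x _
    have h1 : HasDerivAt (fun x => Real.exp (Real.exp (-c * s) * x))
        (Real.exp (Real.exp (-c * s) * x) * Real.exp (-c * s)) x :=
      by simpa using ((hasDerivAt_id x).const_mul (Real.exp (-c * s))).exp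
    have h2 := h1.const_mul (ψ s * Real.exp (-c * s) ^ k)
    have heq : (fun x => ψ s * Real.exp (-c * s) ^ k * Real.exp (Real.exp (-c * s) * x))
        = fun x => f c ψ k x s := by funext x; simp only [f]
    rw [heq] at h2
    convert h2 using 1
    · rfl
    simp only [f, pow_succ]; ring

lemma F_bounds (hc : 0 < c) (hd : 0 < d) (hψ : ContinuousOn ψ (Set.Icc T (T + d)))
    (hψpos : ∀ s ∈ Set.Icc T (T + d), 0 < ψ s) (k : ℕ) (x : ℝ) :
    Real.exp (-c * (T + d)) * F c T d ψ k x ≤ F c T d ψ (k + 1) x ∧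
    F c T d ψ (k + 1) x ≤ Real.exp (-c * T) * F c T d ψ k x := by
  constructor
  · rw [F, F, ← MeasureTheory.integral_const_mul]
    apply MeasureTheory.setIntegral_mono_on
      ((f_integrable hψ k x).const_mul _) (f_integrable hψ (k + 1) x) measurableSet_Icc
    intro s hs
    rw [f_succ]
    apply mul_le_mul_of_nonneg_right _ (f_pos hψpos k x hs).le
    apply Real.exp_le_exp.2
    nlinarith [hs.2]
  · rw [F, F, ← MeasureTheory.integral_const_mul]
    apply MeasureTheory.setIntegral_mono_on
      (f_integrable hψ (k + 1) x) ((f_integrable hψ k x).const_mul _) measurableSet_Icc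
    intro s hs
    rw [f_succ]
    apply mul_le_mul_of_nonneg_right _ (f_pos hψpos k x hs).le
    apply Real.exp_le_exp.2
    nlinarith [hs.1]


lemma Phi_hasDerivAt (hc : 0 < c) (hT : 0 < T) (hd : 0 < d)
    (hψ : ContinuousOn ψ (Set.Icc T (T + d)))
    (hψpos : ∀ s ∈ Set.Icc T (T + d), 0 < ψ s) {Φ : ℝ → ℝ}
    (hΦ : ∀ A : ℝ, Φ A =
      Real.log ((1 / d) * ∫ s in Set.Icc T (T + d), ψ s * Real.exp (Real.exp (-c * s) * A)))
    (x : ℝ) :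
    HasDerivAt Φ (F c T d ψ 1 x / F c T d ψ 0 x) x := by
  have hΦeq : Φ = fun A => Real.log ((1 / d) * F c T d ψ 0 A) := by
    funext A; rw [hΦ]; simp [F, f]
  have h0 : 0 < F c T d ψ 0 x := F_pos hd hψ hψpos 0 x
  have h1 : HasDerivAt (fun A => (1 / d) * F c T d ψ 0 A)
      ((1 / d) * F c T d ψ 1 x) x := (F_hasDerivAt hc hT hψ 0 x).const_mul _
  have h2 := h1.log (by positivity)
  rw [hΦeq]
  convert h2 using 1
  rw [mul_div_mul_left _ _ (by positivity : (1:ℝ)/d ≠ 0)]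

/-- `Φ' = F1/F0`. -/
noncomputable def P (c T d : ℝ) (ψ : ℝ → ℝ) (x : ℝ) : ℝ :=
  F c T d ψ 1 x / F c T d ψ 0 x

lemma P_bounds (hc : 0 < c) (hd : 0 < d) (hψ : ContinuousOn ψ (Set.Icc T (T + d)))
    (hψpos : ∀ s ∈ Set.Icc T (T + d), 0 < ψ s) (x : ℝ) :
    Real.exp (-c * (T + d)) ≤ P c T d ψ x ∧ P c T d ψ x ≤ Real.exp (-c * T) := by
  have h0 : 0 < F c T d ψ 0 x := F_pos hd hψ hψpos 0 x
  obtain ⟨hl, hr⟩ := F_bounds hc hd hψ hψpos 0 x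
  constructor
  · rw [P, le_div_iff₀ h0]; exact hl
  · rw [P, div_le_iff₀ h0]; exact hr

lemma P_hasDerivAt_bound (hc : 0 < c) (hT : 0 < T) (hd : 0 < d)
    (hψ : ContinuousOn ψ (Set.Icc T (T + d)))
    (hψpos : ∀ s ∈ Set.Icc T (T + d), 0 < ψ s) (x : ℝ) :
    ∃ q : ℝ, HasDerivAt (P c T d ψ) q x ∧ |q| ≤ Real.exp (-c * T) * Real.exp (-c * T) := by
  have h0 : 0 < F c T d ψ 0 x := F_pos hd hψ hψpos 0 x
  have h1 : 0 < F c T d ψ 1 x := F_pos hd hψ hψpos 1 x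
  have h2 : 0 < F c T d ψ 2 x := F_pos hd hψ hψpos 2 x
  obtain ⟨hl0, hr0⟩ := F_bounds hc hd hψ hψpos 0 x
  obtain ⟨hl1, hr1⟩ := F_bounds hc hd hψ hψpos 1 x
  simp only [Nat.reduceAdd, zero_add] at hl0 hr0 hl1 hr1
  have hm : 0 < Real.exp (-c * (T + d)) := Real.exp_pos _
  refine ⟨_, HasDerivAt.div (F_hasDerivAt hc hT hψ 1 x) (F_hasDerivAt hc hT hψ 0 x) h0.ne', ?_⟩
  rw [abs_div, abs_of_pos (by positivity : (0:ℝ) < F c T d ψ 0 x ^ 2),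
    div_le_iff₀ (by positivity)]
  set M := Real.exp (-c * T)
  have hM : 0 < M := Real.exp_pos _
  calc |F c T d ψ 2 x * F c T d ψ 0 x - F c T d ψ 1 x * F c T d ψ 1 x|
      ≤ M * M * F c T d ψ 0 x ^ 2 := by
        rw [abs_le]
        constructor
        · nlinarith [mul_pos h2 h0, mul_le_mul hr0 hr0 h1.le (mul_nonneg hM.le h0.le)]
        · nlinarith [mul_le_mul_of_nonneg_right hr1 h0.le,
            mul_le_mul_of_nonneg_left hr0 (mul_nonneg hM.le h0.le), sq_nonneg (F c T d ψ 1 x)]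
    _ = M * M * F c T d ψ 0 x ^ 2 := rfl

end GammaAux

/-- The `z`-derivative of the jump function `γ(t,z,y)` of the electricity
futures model is bounded by `e^{cd}|y|`; in particular `z ↦ γ(t,z,y)` is
Lipschitz with constant `e^{cd}|y|`. -/
theorem gamma_z_lipschitz
    (c T d : ℝ) (hc : 0 < c) (hT : 0 < T) (hd : 0 < d)
    (ψ : ℝ → ℝ) (hψcont : ContinuousOn ψ (Set.Icc T (T + d)))
    (hψpos : ∀ s ∈ Set.Icc T (T + d), 0 < ψ s)
    (Φ Ψ : ℝ → ℝ)
    (hΦ : ∀ A : ℝ, Φ A =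
      Real.log ((1 / d) * ∫ s in Set.Icc T (T + d), ψ s * Real.exp (Real.exp (-c * s) * A)))
    (hΨΦ : ∀ A : ℝ, Ψ (Φ A) = A) (hΦΨ : ∀ z : ℝ, Φ (Ψ z) = z)
    (γ : ℝ → ℝ → ℝ → ℝ)
    (hγ : ∀ t z y : ℝ, γ t z y = Φ (Ψ z + y * Real.exp (c * t)) - z) :
    ∀ t y : ℝ, 0 ≤ t → t ≤ T →
      (∀ z : ℝ, |deriv (fun z' => γ t z' y) z| ≤ Real.exp (c * d) * |y|) ∧
      (∀ z₁ z₂ : ℝ, |γ t z₁ y - γ t z₂ y| ≤ Real.exp (c * d) * |y| * |z₁ - z₂|) := by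
    classical
  set m := Real.exp (-c * (T + d)) with hm_def
  set M := Real.exp (-c * T) with hM_def
  have hm : 0 < m := Real.exp_pos _
  have hM : 0 < M := Real.exp_pos _
  -- derivative of Φ
  have hPd : ∀ x, HasDerivAt Φ (GammaAux.P c T d ψ x) x := fun x =>
    GammaAux.Phi_hasDerivAt hc hT hd hψcont hψpos hΦ x
  have hPb : ∀ x, m ≤ GammaAux.P c T d ψ x ∧ GammaAux.P c T d ψ x ≤ M := fun x =>
    GammaAux.P_bounds hc hd hψcont hψpos x
  have hPpos : ∀ x, 0 < GammaAux.P c T d ψ x := fun x => lt_of_lt_of_le hm (hPb x).1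
  -- Lipschitz bound for Φ' = P
  have hPL : ∀ u v : ℝ, |GammaAux.P c T d ψ u - GammaAux.P c T d ψ v| ≤ M * M * |u - v| := by
    choose q hq hqb using fun x => GammaAux.P_hasDerivAt_bound hc hT hd hψcont hψpos x
    intro u v
    have := (convex_univ : Convex ℝ (Set.univ : Set ℝ))
      |>.norm_image_sub_le_of_norm_hasDerivWithin_le
      (f := GammaAux.P c T d ψ) (f' := q)
      (fun x _ => (hq x).hasDerivWithinAt)
      (fun x _ => by rw [Real.norm_eq_abs]; exact hqb x)
      (Set.mem_univ v) (Set.mem_univ u)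
    simpa only [Real.norm_eq_abs] using this
  -- Ψ is continuous
  have hmono : StrictMono Φ := strictMono_of_hasDerivAt_pos hPd hPpos
  have hsurj : Function.Surjective Φ := fun z => ⟨Ψ z, hΦΨ z⟩
  have hΨeq : Ψ = ⇑(StrictMono.orderIsoOfSurjective Φ hmono hsurj).symm := by
    funext z
    apply hmono.injective
    rw [hΦΨ]
    exact (StrictMono.orderIsoOfSurjective_self_symm_apply Φ hmono hsurj z).symm
  have hΨcont : Continuous Ψ := by
    rw [hΨeq]; exact OrderIso.continuous _
  -- derivative of Ψ
  have hΨd : ∀ z, HasDerivAt Ψ (GammaAux.P c T d ψ (Ψ z))⁻¹ z := fun z =>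
    HasDerivAt.of_local_left_inverse hΨcont.continuousAt (hPd (Ψ z)) (hPpos (Ψ z)).ne'
      (Filter.Eventually.of_forall hΦΨ)
  intro t y ht htT
  set h0 := y * Real.exp (c * t) with hh0
  have hγfun : (fun z' => γ t z' y) = fun z' => Φ (Ψ z' + h0) - z' := by
    funext z'; rw [hγ]
  -- derivative of z ↦ γ t z y
  have hgd : ∀ z, HasDerivAt (fun z' => γ t z' y)
      (GammaAux.P c T d ψ (Ψ z + h0) * (GammaAux.P c T d ψ (Ψ z))⁻¹ - 1) z := by
    intro z
    rw [hγfun]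
    have h1 : HasDerivAt (fun z' => Ψ z' + h0) (GammaAux.P c T d ψ (Ψ z))⁻¹ z :=
      (hΨd z).add_const h0
    have h2 := (hPd (Ψ z + h0)).comp z h1
    exact h2.sub (hasDerivAt_id z)
  -- bound on the derivative
  have habs_h0 : |h0| = |y| * Real.exp (c * t) := by
    rw [hh0, abs_mul, abs_of_pos (Real.exp_pos _)]
  have hbound : ∀ z : ℝ,
      |GammaAux.P c T d ψ (Ψ z + h0) * (GammaAux.P c T d ψ (Ψ z))⁻¹ - 1|
        ≤ Real.exp (c * d) * |y| := by
    intro z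
    set a := Ψ z
    have hpa := hPpos a
    have heq : GammaAux.P c T d ψ (a + h0) * (GammaAux.P c T d ψ a)⁻¹ - 1
        = (GammaAux.P c T d ψ (a + h0) - GammaAux.P c T d ψ a) / GammaAux.P c T d ψ a := by
      field_simp
    rw [heq, abs_div, abs_of_pos hpa]
    have hnum : |GammaAux.P c T d ψ (a + h0) - GammaAux.P c T d ψ a| ≤ M * M * |h0| := by
      simpa using hPL (a + h0) a
    calc |GammaAux.P c T d ψ (a + h0) - GammaAux.P c T d ψ a| / GammaAux.P c T d ψ a
        ≤ M * M * |h0| / m := by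
          apply div_le_div₀ (by positivity) hnum hm (hPb a).1
      _ ≤ Real.exp (c * d) * |y| := by
          rw [habs_h0]
          have : M * M / m = Real.exp (c * d - c * T) := by
            rw [hM_def, hm_def, ← Real.exp_add, ← Real.exp_sub]
            congr 1; ring
          have hexp : Real.exp (c * d - c * T) * Real.exp (c * t) ≤ Real.exp (c * d) := by
            rw [← Real.exp_add]
            apply Real.exp_le_exp.2
            nlinarith
          calc M * M * (|y| * Real.exp (c * t)) / m
              = (M * M / m) * Real.exp (c * t) * |y| := by ring
            _ = Real.exp (c * d - c * T) * Real.exp (c * t) * |y| := by rw [this]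
            _ ≤ Real.exp (c * d) * |y| := by
                apply mul_le_mul_of_nonneg_right hexp (abs_nonneg _)
  constructor
  · intro z
    rw [(hgd z).deriv]
    exact hbound z
  · intro z₁ z₂
    have := (convex_univ : Convex ℝ (Set.univ : Set ℝ))
      |>.norm_image_sub_le_of_norm_hasDerivWithin_le
      (f := fun z' => γ t z' y)
      (f' := fun z => GammaAux.P c T d ψ (Ψ z + h0) * (GammaAux.P c T d ψ (Ψ z))⁻¹ - 1)
      (fun x _ => (hgd x).hasDerivWithinAt)
      (fun x _ => by rw [Real.norm_eq_abs]; exact hbound x)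
      (Set.mem_univ z₂) (Set.mem_univ z₁)
    simpa only [Real.norm_eq_abs] using this
end

section
/- Let (Ω, F, P) be a probability space, H₁, H₂ square-integrable random variables, x ∈ ℝ, and let A be a cone of admissible integrands such that the gains G(θ) = ∫ θ dS are square integrable for θ ∈ A. Define v_i(x) = inf_{θ∈A} E[(H_i − x − G(θ))²] and x*_i = argmin_x v_i(x) (assuming the infimum over x is attained and v_i(x) = a x² + b_i x + c_i with a > 0). Then |x*₁ − x*₂| ≤ a^{-1/2} ‖H₁ − H₂‖_{L²}. -/
open MeasureTheory

/-- Cauchy–Schwarz for integrals of real functions in `L²`. -/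
lemma integral_mul_le_sqrt_mul_sqrt_aux {Ω : Type*} {m : MeasurableSpace Ω} {μ : Measure Ω}
    (f g : Ω → ℝ) (hf : MemLp f 2 μ) (hg : MemLp g 2 μ) :
    ∫ ω, f ω * g ω ∂μ ≤
      Real.sqrt (∫ ω, f ω ^ 2 ∂μ) * Real.sqrt (∫ ω, g ω ^ 2 ∂μ) := by
  have h2 : Real.HolderConjugate 2 2 := Real.HolderConjugate.two_two
  have h22 : ENNReal.ofReal 2 = 2 := by norm_num
  have hf' : MemLp f (ENNReal.ofReal 2) μ := by rw [h22]; exact hf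
  have hg' : MemLp g (ENNReal.ofReal 2) μ := by rw [h22]; exact hg
  have H := integral_mul_norm_le_Lp_mul_Lq (μ := μ) h2 hf' hg'
  have e0 : ∀ y : ℝ, ‖y‖ ^ (2 : ℝ) = y ^ 2 := fun y => by
    rw [show (2 : ℝ) = ((2 : ℕ) : ℝ) by norm_num, Real.rpow_natCast,
      Real.norm_eq_abs, sq_abs]
  simp only [e0] at H
  have hnn1 : 0 ≤ ∫ ω, f ω ^ 2 ∂μ := integral_nonneg fun ω => sq_nonneg _
  have hnn2 : 0 ≤ ∫ ω, g ω ^ 2 ∂μ := integral_nonneg fun ω => sq_nonneg _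
  rw [← Real.sqrt_eq_rpow, ← Real.sqrt_eq_rpow] at H
  have hbound : Integrable (fun ω => (f ω ^ 2 + g ω ^ 2) / 2) μ :=
    (hf.integrable_sq.add hg.integrable_sq).div_const 2
  have hmulint : Integrable (fun ω => ‖f ω‖ * ‖g ω‖) μ := by
    refine Integrable.mono' hbound
      (hf.1.norm.mul hg.1.norm) (Filter.Eventually.of_forall fun ω => ?_)
    have h1 : ‖‖f ω‖ * ‖g ω‖‖ = |f ω| * |g ω| := by
      simp [abs_mul, Real.norm_eq_abs, abs_abs]
    rw [h1]
    nlinarith [sq_nonneg (|f ω| - |g ω|), sq_abs (f ω), sq_abs (g ω)]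
  have hfgint : Integrable (fun ω => f ω * g ω) μ := by
    refine Integrable.mono' hbound
      (hf.1.mul hg.1) (Filter.Eventually.of_forall fun ω => ?_)
    have h1 : ‖f ω * g ω‖ = |f ω| * |g ω| := by simp [abs_mul]
    rw [h1]
    nlinarith [sq_nonneg (|f ω| - |g ω|), sq_abs (f ω), sq_abs (g ω)]
  have habs : ∫ ω, f ω * g ω ∂μ ≤ ∫ ω, ‖f ω‖ * ‖g ω‖ ∂μ := by
    refine integral_mono hfgint hmulint fun ω => ?_
    calc f ω * g ω ≤ |f ω * g ω| := le_abs_self _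
      _ = ‖f ω‖ * ‖g ω‖ := by rw [abs_mul]; rfl
  exact habs.trans H

/-- Minkowski inequality for `L²` integrals. -/
lemma sqrt_integral_add_sq_le_aux {Ω : Type*} {m : MeasurableSpace Ω} {μ : Measure Ω}
    (f g : Ω → ℝ) (hf : MemLp f 2 μ) (hg : MemLp g 2 μ) :
    Real.sqrt (∫ ω, (f ω + g ω) ^ 2 ∂μ) ≤
      Real.sqrt (∫ ω, f ω ^ 2 ∂μ) + Real.sqrt (∫ ω, g ω ^ 2 ∂μ) := by
  set A := Real.sqrt (∫ ω, f ω ^ 2 ∂μ) with hA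
  set B := Real.sqrt (∫ ω, g ω ^ 2 ∂μ) with hB
  have hA0 : 0 ≤ A := Real.sqrt_nonneg _
  have hB0 : 0 ≤ B := Real.sqrt_nonneg _
  have hfint := hf.integrable_sq
  have hgint := hg.integrable_sq
  have hbound : Integrable (fun ω => (f ω ^ 2 + g ω ^ 2) / 2) μ :=
    (hfint.add hgint).div_const 2
  have hmul : Integrable (fun ω => f ω * g ω) μ := by
    refine Integrable.mono' hbound
      (hf.1.mul hg.1) (Filter.Eventually.of_forall fun ω => ?_)
    have h1 : ‖f ω * g ω‖ = |f ω| * |g ω| := by simp [abs_mul]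
    rw [h1]
    nlinarith [sq_nonneg (|f ω| - |g ω|), sq_abs (f ω), sq_abs (g ω)]
  have hfA : ∫ ω, f ω ^ 2 ∂μ = A ^ 2 := by
    rw [hA, Real.sq_sqrt (integral_nonneg fun ω => sq_nonneg _)]
  have hgB : ∫ ω, g ω ^ 2 ∂μ = B ^ 2 := by
    rw [hB, Real.sq_sqrt (integral_nonneg fun ω => sq_nonneg _)]
  have hCS : ∫ ω, f ω * g ω ∂μ ≤ A * B := integral_mul_le_sqrt_mul_sqrt_aux f g hf hg
  have hexp : ∫ ω, (f ω + g ω) ^ 2 ∂μ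
      = ∫ ω, f ω ^ 2 ∂μ + 2 * ∫ ω, f ω * g ω ∂μ + ∫ ω, g ω ^ 2 ∂μ := by
    calc ∫ ω, (f ω + g ω) ^ 2 ∂μ
        = ∫ ω, (f ω ^ 2 + 2 * (f ω * g ω)) + g ω ^ 2 ∂μ :=
          integral_congr_ae (Filter.Eventually.of_forall fun ω => by ring)
      _ = ∫ ω, f ω ^ 2 + 2 * (f ω * g ω) ∂μ + ∫ ω, g ω ^ 2 ∂μ :=
          integral_add (hfint.add (hmul.const_mul 2)) hgint
      _ = (∫ ω, f ω ^ 2 ∂μ + ∫ ω, 2 * (f ω * g ω) ∂μ) + ∫ ω, g ω ^ 2 ∂μ := by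
          rw [integral_add hfint (hmul.const_mul 2)]
      _ = ∫ ω, f ω ^ 2 ∂μ + 2 * ∫ ω, f ω * g ω ∂μ + ∫ ω, g ω ^ 2 ∂μ := by
          rw [integral_const_mul]
  have hle : ∫ ω, (f ω + g ω) ^ 2 ∂μ ≤ (A + B) ^ 2 := by
    rw [hexp, hfA, hgB]; nlinarith
  calc Real.sqrt (∫ ω, (f ω + g ω) ^ 2 ∂μ) ≤ Real.sqrt ((A + B) ^ 2) :=
        Real.sqrt_le_sqrt hle
    _ = A + B := Real.sqrt_sq (by linarith)

/-- Algebraic core: comparison of the minimizers of two quadratics with the same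
leading coefficient whose square roots differ by at most `N`. -/
lemma coeff_diff_le_aux {a b₁ b₂ c₁ c₂ N : ℝ} (ha : 0 < a) (hN : 0 ≤ N)
    (h1 : ∀ x : ℝ, 0 ≤ a * x ^ 2 + b₁ * x + c₁)
    (h2 : ∀ x : ℝ, 0 ≤ a * x ^ 2 + b₂ * x + c₂)
    (hle : ∀ x : ℝ, Real.sqrt (a * x ^ 2 + b₁ * x + c₁)
      ≤ Real.sqrt (a * x ^ 2 + b₂ * x + c₂) + N) :
    b₁ - b₂ ≤ 2 * Real.sqrt a * N := by
  set s := Real.sqrt a with hs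
  have hs0 : 0 < s := Real.sqrt_pos.2 ha
  have hsa : s ^ 2 = a := Real.sq_sqrt ha.le
  have hs' : s ≠ 0 := hs0.ne'
  have ha' : a ≠ 0 := ha.ne'
  have sq_eq : ∀ b x : ℝ, (s * x + b / (2 * s)) ^ 2 = a * x ^ 2 + b * x + b ^ 2 / (4 * a) := by
    intro b x
    rw [← hsa]
    field_simp
    ring
  have hmin : ∀ b c : ℝ, (∀ x : ℝ, 0 ≤ a * x ^ 2 + b * x + c) → 0 ≤ c - b ^ 2 / (4 * a) := by
    intro b c h
    have hval : a * (-b / (2 * a)) ^ 2 + b * (-b / (2 * a)) + c = c - b ^ 2 / (4 * a) := by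
      field_simp
      ring
    have h0 := h (-b / (2 * a))
    rw [hval] at h0
    exact h0
  have hm₁ : 0 ≤ c₁ - b₁ ^ 2 / (4 * a) := hmin b₁ c₁ h1
  have hm₂ : 0 ≤ c₂ - b₂ ^ 2 / (4 * a) := hmin b₂ c₂ h2
  set m₂ := c₂ - b₂ ^ 2 / (4 * a) with hm2def
  -- key estimate for each `t > 0`
  have key : ∀ t : ℝ, 0 < t → (b₁ - b₂) / (2 * s) ≤ N + m₂ / (2 * t) := by
    intro t ht
    set x := (t - b₂ / (2 * s)) / s with hx
    have hxt : s * x + b₂ / (2 * s) = t := by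
      rw [hx]
      field_simp
      ring
    -- lower bound for the first quadratic
    have hlow : s * x + b₁ / (2 * s) ≤ Real.sqrt (a * x ^ 2 + b₁ * x + c₁) := by
      have hsq : (s * x + b₁ / (2 * s)) ^ 2 ≤ a * x ^ 2 + b₁ * x + c₁ := by
        rw [sq_eq b₁ x]; linarith
      calc s * x + b₁ / (2 * s) ≤ |s * x + b₁ / (2 * s)| := le_abs_self _
        _ = Real.sqrt ((s * x + b₁ / (2 * s)) ^ 2) := (Real.sqrt_sq_eq_abs _).symm
        _ ≤ Real.sqrt (a * x ^ 2 + b₁ * x + c₁) := Real.sqrt_le_sqrt hsq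
    -- upper bound for the second quadratic
    have hup : Real.sqrt (a * x ^ 2 + b₂ * x + c₂) ≤ t + m₂ / (2 * t) := by
      have hval : a * x ^ 2 + b₂ * x + c₂ = t ^ 2 + m₂ := by
        have h := sq_eq b₂ x
        rw [hxt] at h
        rw [hm2def]
        linarith
      have hsq2 : t ^ 2 + m₂ ≤ (t + m₂ / (2 * t)) ^ 2 := by
        have hexpand : (t + m₂ / (2 * t)) ^ 2 = t ^ 2 + m₂ + m₂ ^ 2 / (4 * t ^ 2) := by
          field_simp
          ring
        have : 0 ≤ m₂ ^ 2 / (4 * t ^ 2) := by positivity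
        rw [hexpand]; linarith
      rw [hval]
      calc Real.sqrt (t ^ 2 + m₂) ≤ Real.sqrt ((t + m₂ / (2 * t)) ^ 2) :=
            Real.sqrt_le_sqrt hsq2
        _ = t + m₂ / (2 * t) := Real.sqrt_sq (by positivity)
    have := (hlow.trans (hle x)).trans (by linarith : Real.sqrt (a * x ^ 2 + b₂ * x + c₂) + N ≤ t + m₂ / (2 * t) + N)
    have hbx : s * x + b₁ / (2 * s) = t + (b₁ - b₂) / (2 * s) := by
      rw [← hxt]; ring
    rw [hbx] at this
    linarith
  -- let `t → ∞`
  have hfinal : (b₁ - b₂) / (2 * s) ≤ N := by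
    refine le_of_forall_pos_le_add fun ε hε => ?_
    rcases le_or_gt m₂ 0 with hm | hm
    · have := key 1 one_pos
      have : m₂ / (2 * 1) ≤ 0 := by
        apply div_nonpos_of_nonpos_of_nonneg hm; norm_num
      linarith [key 1 one_pos]
    · have ht : 0 < m₂ / (2 * ε) := by positivity
      have := key (m₂ / (2 * ε)) ht
      have heq : m₂ / (2 * (m₂ / (2 * ε))) = ε := by
        field_simp
      rw [heq] at this
      linarith
  calc b₁ - b₂ = ((b₁ - b₂) / (2 * s)) * (2 * s) := by field_simp
    _ ≤ N * (2 * s) := by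
        apply mul_le_mul_of_nonneg_right hfinal; positivity
    _ = 2 * s * N := by ring

/-- Stability of the quadratic-hedging price with respect to the payoff:
`|x*₁ − x*₂| ≤ a^{-1/2} ‖H₁ − H₂‖_{L²}`. -/
theorem quadratic_hedging_price_stability
    {Ω : Type*} {m : MeasurableSpace Ω} {μ : Measure Ω} [IsProbabilityMeasure μ]
    {ι : Type*} [Nonempty ι] (G : ι → Ω → ℝ)
    (hG : ∀ θ, MemLp (G θ) 2 μ)
    (hzero : ∃ θ₀, G θ₀ =ᵐ[μ] fun _ => (0 : ℝ))
    (hcone : ∀ θ (r : ℝ), ∃ θ', G θ' =ᵐ[μ] fun ω => r * G θ ω)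
    (hadd : ∀ θ₁ θ₂, ∃ θ, G θ =ᵐ[μ] fun ω => G θ₁ ω + G θ₂ ω)
    (H₁ H₂ : Ω → ℝ) (hH₁ : MemLp H₁ 2 μ) (hH₂ : MemLp H₂ 2 μ)
    (a b₁ b₂ c₁ c₂ : ℝ) (ha : 0 < a)
    (hv₁ : ∀ x : ℝ, (⨅ θ : ι, ∫ ω, (H₁ ω - x - G θ ω) ^ 2 ∂μ) = a * x ^ 2 + b₁ * x + c₁)
    (hv₂ : ∀ x : ℝ, (⨅ θ : ι, ∫ ω, (H₂ ω - x - G θ ω) ^ 2 ∂μ) = a * x ^ 2 + b₂ * x + c₂) :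
    |(-b₁ / (2 * a)) - (-b₂ / (2 * a))| ≤
      (Real.sqrt a)⁻¹ * Real.sqrt (∫ ω, (H₁ ω - H₂ ω) ^ 2 ∂μ) := by
  set N := Real.sqrt (∫ ω, (H₁ ω - H₂ ω) ^ 2 ∂μ) with hNdef
  have hN : 0 ≤ N := Real.sqrt_nonneg _
  have hHH : MemLp (fun ω => H₁ ω - H₂ ω) 2 μ := hH₁.sub hH₂
  have hHH' : MemLp (fun ω => H₂ ω - H₁ ω) 2 μ := hH₂.sub hH₁
  have hNsym : Real.sqrt (∫ ω, (H₂ ω - H₁ ω) ^ 2 ∂μ) = N := by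
    rw [hNdef]
    congr 1
    apply integral_congr_ae (Filter.Eventually.of_forall fun ω => by ring)
  -- nonnegativity of the quadratics
  have hpos₁ : ∀ x : ℝ, 0 ≤ a * x ^ 2 + b₁ * x + c₁ := by
    intro x; rw [← hv₁ x]
    exact Real.iInf_nonneg fun θ => integral_nonneg fun ω => sq_nonneg _
  have hpos₂ : ∀ x : ℝ, 0 ≤ a * x ^ 2 + b₂ * x + c₂ := by
    intro x; rw [← hv₂ x]
    exact Real.iInf_nonneg fun θ => integral_nonneg fun ω => sq_nonneg _
  -- the seminorm comparison, in both directions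
  have hcompare : ∀ (K₁ K₂ : Ω → ℝ), MemLp K₁ 2 μ → MemLp K₂ 2 μ →
      ∀ (x : ℝ) (d e : ℝ),
      (⨅ θ : ι, ∫ ω, (K₁ ω - x - G θ ω) ^ 2 ∂μ) = d →
      (⨅ θ : ι, ∫ ω, (K₂ ω - x - G θ ω) ^ 2 ∂μ) = e →
      Real.sqrt d ≤ Real.sqrt e + Real.sqrt (∫ ω, (K₁ ω - K₂ ω) ^ 2 ∂μ) := by
    intro K₁ K₂ hK₁ hK₂ x d e hd he
    set M := Real.sqrt (∫ ω, (K₁ ω - K₂ ω) ^ 2 ∂μ) with hMdef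
    have he0 : 0 ≤ e := by
      rw [← he]; exact Real.iInf_nonneg fun θ => integral_nonneg fun ω => sq_nonneg _
    refine le_of_forall_pos_le_add fun ε hε => ?_
    -- pick a near-minimizer for the second infimum
    have hlt : (⨅ θ : ι, ∫ ω, (K₂ ω - x - G θ ω) ^ 2 ∂μ) < e + ε ^ 2 := by
      rw [he]; nlinarith
    obtain ⟨θ, hθ⟩ := exists_lt_of_ciInf_lt hlt
    have hθ' : ∫ ω, (K₂ ω - x - G θ ω) ^ 2 ∂μ ≤ e + ε ^ 2 := hθ.le
    have hdle : d ≤ ∫ ω, (K₁ ω - x - G θ ω) ^ 2 ∂μ := by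
      rw [← hd]
      refine ciInf_le ⟨0, ?_⟩ θ
      rintro y ⟨θ', rfl⟩
      exact integral_nonneg fun ω => sq_nonneg _
    have hf2 : MemLp (fun ω => K₂ ω - x - G θ ω) 2 μ :=
      (hK₂.sub (memLp_const x)).sub (hG θ)
    have hmink := sqrt_integral_add_sq_le_aux (fun ω => K₂ ω - x - G θ ω)
      (fun ω => K₁ ω - K₂ ω) hf2 (hK₁.sub hK₂)
    have hrw : ∫ ω, ((fun ω => K₂ ω - x - G θ ω) ω + (fun ω => K₁ ω - K₂ ω) ω) ^ 2 ∂μ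
        = ∫ ω, (K₁ ω - x - G θ ω) ^ 2 ∂μ := by
      apply integral_congr_ae (Filter.Eventually.of_forall fun ω => by simp; ring)
    rw [hrw] at hmink
    have h1 : Real.sqrt d ≤ Real.sqrt (∫ ω, (K₁ ω - x - G θ ω) ^ 2 ∂μ) :=
      Real.sqrt_le_sqrt hdle
    have h2 : Real.sqrt (∫ ω, (K₂ ω - x - G θ ω) ^ 2 ∂μ) ≤ Real.sqrt (e + ε ^ 2) :=
      Real.sqrt_le_sqrt hθ'
    have h3 : Real.sqrt (e + ε ^ 2) ≤ Real.sqrt e + ε := by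
      have hb : e + ε ^ 2 ≤ (Real.sqrt e + ε) ^ 2 := by
        nlinarith [Real.sq_sqrt he0, Real.sqrt_nonneg e, hε.le]
      calc Real.sqrt (e + ε ^ 2) ≤ Real.sqrt ((Real.sqrt e + ε) ^ 2) :=
            Real.sqrt_le_sqrt hb
        _ = Real.sqrt e + ε := Real.sqrt_sq (by positivity)
    linarith [hmink, h1, h2, h3]
  have hle₁ : ∀ x : ℝ, Real.sqrt (a * x ^ 2 + b₁ * x + c₁)
      ≤ Real.sqrt (a * x ^ 2 + b₂ * x + c₂) + N := fun x =>
    hcompare H₁ H₂ hH₁ hH₂ x _ _ (hv₁ x) (hv₂ x)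
  have hle₂ : ∀ x : ℝ, Real.sqrt (a * x ^ 2 + b₂ * x + c₂)
      ≤ Real.sqrt (a * x ^ 2 + b₁ * x + c₁) + N := fun x => by
    have := hcompare H₂ H₁ hH₂ hH₁ x _ _ (hv₂ x) (hv₁ x)
    rwa [hNsym] at this
  have hd₁ := coeff_diff_le_aux ha hN hpos₁ hpos₂ hle₁
  have hd₂ := coeff_diff_le_aux ha hN hpos₂ hpos₁ hle₂
  have habs : |b₁ - b₂| ≤ 2 * Real.sqrt a * N := abs_le.2 ⟨by linarith, hd₁⟩
  have hs0 : 0 < Real.sqrt a := Real.sqrt_pos.2 ha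
  have hsa : Real.sqrt a * Real.sqrt a = a := Real.mul_self_sqrt ha.le
  have heq : |(-b₁ / (2 * a)) - (-b₂ / (2 * a))| = |b₁ - b₂| / (2 * a) := by
    rw [div_sub_div_same, abs_div, abs_of_pos (by positivity : (0:ℝ) < 2 * a)]
    congr 1
    rw [← abs_neg]; congr 1; ring
  rw [heq]
  rw [div_le_iff₀ (by positivity : (0:ℝ) < 2 * a)]
  calc |b₁ - b₂| ≤ 2 * Real.sqrt a * N := habs
    _ = (Real.sqrt a)⁻¹ * N * (2 * a) := by
        have h5 : (Real.sqrt a)⁻¹ * N * (2 * a) = 2 * (a / Real.sqrt a) * N := by ring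
        rw [h5, Real.div_sqrt]
end

section
/- Let v₁, v₂ : ℝ → ℝ be given by v_i(x) = inf_{θ∈A} E[(H_i − x − G(θ))²] with 0 ∈ A and H₁, H₂ ∈ L²(P). Then for every x ∈ ℝ: |v₁(x) − v₂(x)| ≤ (2|x| + ‖H₁‖₂ + ‖H₂‖₂ + ‖H₁ − H₂‖₂) ‖H₁ − H₂‖₂. -/
open MeasureTheory

private lemma sqrt_int_sq_eq {Ω : Type*} {m : MeasurableSpace Ω} {μ : Measure Ω}
    {f : Ω → ℝ} (hf : MemLp f 2 μ) :
    Real.sqrt (∫ ω, (f ω) ^ 2 ∂μ) = ‖hf.toLp f‖ := by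
  have h := MeasureTheory.L2.inner_def (𝕜 := ℝ) (hf.toLp f) (hf.toLp f)
  rw [real_inner_self_eq_norm_sq] at h
  have h2 : ∫ ω, (f ω) ^ 2 ∂μ = ‖hf.toLp f‖ ^ 2 := by
    rw [h]
    refine integral_congr_ae ?_
    filter_upwards [hf.coeFn_toLp] with ω hω
    simp [hω, sq, RCLike.inner_apply, conj_trivial]
  rw [h2, Real.sqrt_sq (norm_nonneg _)]

private lemma minkowski_sq {Ω : Type*} {m : MeasurableSpace Ω} {μ : Measure Ω}
    {f g : Ω → ℝ} (hf : MemLp f 2 μ) (hg : MemLp g 2 μ) :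
    Real.sqrt (∫ ω, (f ω + g ω) ^ 2 ∂μ) ≤
      Real.sqrt (∫ ω, (f ω) ^ 2 ∂μ) + Real.sqrt (∫ ω, (g ω) ^ 2 ∂μ) := by
  have hfg : MemLp (fun ω => f ω + g ω) 2 μ := hf.add hg
  rw [sqrt_int_sq_eq hfg, sqrt_int_sq_eq hf, sqrt_int_sq_eq hg]
  have : hfg.toLp (fun ω => f ω + g ω) = hf.toLp f + hg.toLp g :=
    MemLp.toLp_add hf hg
  rw [this]
  exact norm_add_le _ _

private lemma one_sided {Ω : Type*} {m : MeasurableSpace Ω} {μ : Measure Ω}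
    [IsProbabilityMeasure μ]
    {ι : Type*} [Nonempty ι] (G : ι → Ω → ℝ)
    (hG : ∀ θ, MemLp (G θ) 2 μ)
    (hzero : ∃ θ₀, G θ₀ =ᵐ[μ] fun _ => (0 : ℝ))
    (H₁ H₂ : Ω → ℝ) (hH₁ : MemLp H₁ 2 μ) (hH₂ : MemLp H₂ 2 μ)
    (x : ℝ) :
    (⨅ θ : ι, ∫ ω, (H₁ ω - x - G θ ω) ^ 2 ∂μ) -
        (⨅ θ : ι, ∫ ω, (H₂ ω - x - G θ ω) ^ 2 ∂μ) ≤
      (2 * |x| + Real.sqrt (∫ ω, (H₁ ω) ^ 2 ∂μ) + Real.sqrt (∫ ω, (H₂ ω) ^ 2 ∂μ) +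
          Real.sqrt (∫ ω, (H₁ ω - H₂ ω) ^ 2 ∂μ)) *
        Real.sqrt (∫ ω, (H₁ ω - H₂ ω) ^ 2 ∂μ) := by
  set f₁ : ι → ℝ := fun θ => ∫ ω, (H₁ ω - x - G θ ω) ^ 2 ∂μ with hf₁
  set f₂ : ι → ℝ := fun θ => ∫ ω, (H₂ ω - x - G θ ω) ^ 2 ∂μ with hf₂
  set D : ℝ := Real.sqrt (∫ ω, (H₁ ω - H₂ ω) ^ 2 ∂μ) with hDdef
  set N₁ : ℝ := Real.sqrt (∫ ω, (H₁ ω) ^ 2 ∂μ) with hN₁def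
  set N₂ : ℝ := Real.sqrt (∫ ω, (H₂ ω) ^ 2 ∂μ) with hN₂def
  have hmem₁ : ∀ θ, MemLp (fun ω => H₁ ω - x - G θ ω) 2 μ :=
    fun θ => (hH₁.sub (memLp_const x)).sub (hG θ)
  have hmem₂ : ∀ θ, MemLp (fun ω => H₂ ω - x - G θ ω) 2 μ :=
    fun θ => (hH₂.sub (memLp_const x)).sub (hG θ)
  have hd : MemLp (fun ω => H₁ ω - H₂ ω) 2 μ := hH₁.sub hH₂
  have h1nn : ∀ θ, (0:ℝ) ≤ f₁ θ := fun θ => integral_nonneg fun ω => sq_nonneg _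
  have h2nn : ∀ θ, (0:ℝ) ≤ f₂ θ := fun θ => integral_nonneg fun ω => sq_nonneg _
  have bdd₁ : BddBelow (Set.range f₁) := ⟨0, by rintro y ⟨θ, rfl⟩; exact h1nn θ⟩
  have bdd₂ : BddBelow (Set.range f₂) := ⟨0, by rintro y ⟨θ, rfl⟩; exact h2nn θ⟩
  set v₁ : ℝ := ⨅ θ, f₁ θ with hv₁def
  set v₂ : ℝ := ⨅ θ, f₂ θ with hv₂def
  have hv₁nn : 0 ≤ v₁ := le_ciInf h1nn
  have hv₂nn : 0 ≤ v₂ := le_ciInf h2nn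
  have hD0 : 0 ≤ D := Real.sqrt_nonneg _
  -- pointwise Minkowski
  have tri : ∀ θ, Real.sqrt (f₁ θ) ≤ Real.sqrt (f₂ θ) + D := by
    intro θ
    have heq : f₁ θ = ∫ ω, ((H₂ ω - x - G θ ω) + (H₁ ω - H₂ ω)) ^ 2 ∂μ := by
      rw [hf₁]
      refine integral_congr_ae (Filter.Eventually.of_forall fun ω => ?_)
      ring
    rw [heq]
    exact minkowski_sq (hmem₂ θ) hd
  -- √v₁ ≤ √(f₂ θ) + D for all θ
  have sv₁le : ∀ θ, Real.sqrt v₁ ≤ Real.sqrt (f₂ θ) + D := by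
    intro θ
    calc Real.sqrt v₁ ≤ Real.sqrt (f₁ θ) := Real.sqrt_le_sqrt (ciInf_le bdd₁ θ)
    _ ≤ Real.sqrt (f₂ θ) + D := tri θ
  -- key : √v₁ ≤ √v₂ + D
  have key : Real.sqrt v₁ ≤ Real.sqrt v₂ + D := by
    by_cases h : Real.sqrt v₁ ≤ D
    · have := Real.sqrt_nonneg v₂; linarith
    · push_neg at h
      have hsq : ∀ θ, (Real.sqrt v₁ - D) ^ 2 ≤ f₂ θ := by
        intro θ
        have h1 := sv₁le θ
        have h2 := Real.sq_sqrt (h2nn θ)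
        have h3 := Real.sqrt_nonneg (f₂ θ)
        nlinarith
      have hle : (Real.sqrt v₁ - D) ^ 2 ≤ v₂ := le_ciInf hsq
      have := Real.sqrt_le_sqrt hle
      rw [Real.sqrt_sq (by linarith)] at this
      linarith
  -- bounds on √v₁, √v₂ via θ₀
  obtain ⟨θ₀, hθ₀⟩ := hzero
  have sqbound : ∀ (H : Ω → ℝ), MemLp H 2 μ →
      Real.sqrt (∫ ω, (H ω - x - G θ₀ ω) ^ 2 ∂μ) ≤ Real.sqrt (∫ ω, (H ω) ^ 2 ∂μ) + |x| := by
    intro H hH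
    have heq : ∫ ω, (H ω - x - G θ₀ ω) ^ 2 ∂μ = ∫ ω, (H ω + (-x)) ^ 2 ∂μ := by
      refine integral_congr_ae ?_
      filter_upwards [hθ₀] with ω hω
      rw [hω]; ring
    rw [heq]
    have hcx : ∫ ω, ((fun _ : Ω => -x) ω) ^ 2 ∂μ = x ^ 2 := by
      simp [integral_const]
    calc Real.sqrt (∫ ω, (H ω + (-x)) ^ 2 ∂μ)
        ≤ Real.sqrt (∫ ω, (H ω) ^ 2 ∂μ) + Real.sqrt (∫ ω, ((fun _ : Ω => -x) ω) ^ 2 ∂μ) :=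
          minkowski_sq hH (memLp_const (-x))
      _ = Real.sqrt (∫ ω, (H ω) ^ 2 ∂μ) + |x| := by rw [hcx, Real.sqrt_sq_eq_abs]
  have sv₁ : Real.sqrt v₁ ≤ N₁ + |x| :=
    le_trans (Real.sqrt_le_sqrt (ciInf_le bdd₁ θ₀)) (sqbound H₁ hH₁)
  have sv₂ : Real.sqrt v₂ ≤ N₂ + |x| :=
    le_trans (Real.sqrt_le_sqrt (ciInf_le bdd₂ θ₀)) (sqbound H₂ hH₂)
  have hN₁0 : 0 ≤ N₁ := Real.sqrt_nonneg _
  have hN₂0 : 0 ≤ N₂ := Real.sqrt_nonneg _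
  have hv₁eq : v₁ = Real.sqrt v₁ ^ 2 := (Real.sq_sqrt hv₁nn).symm
  have hv₂eq : v₂ = Real.sqrt v₂ ^ 2 := (Real.sq_sqrt hv₂nn).symm
  have hs₁0 : 0 ≤ Real.sqrt v₁ := Real.sqrt_nonneg _
  have hs₂0 : 0 ≤ Real.sqrt v₂ := Real.sqrt_nonneg _
  nlinarith [mul_le_mul_of_nonneg_left (sub_le_iff_le_add.mpr key)
      (by linarith : (0:ℝ) ≤ Real.sqrt v₁ + Real.sqrt v₂),
    mul_le_mul_of_nonneg_right (by linarith : Real.sqrt v₁ + Real.sqrt v₂ ≤ N₁ + N₂ + 2 * |x|) hD0]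

/-- Stability of the quadratic-hedging value function with respect to the payoff. -/
theorem quadratic_hedging_value_stability
    {Ω : Type*} {m : MeasurableSpace Ω} {μ : Measure Ω} [IsProbabilityMeasure μ]
    {ι : Type*} [Nonempty ι] (G : ι → Ω → ℝ)
    (hG : ∀ θ, MemLp (G θ) 2 μ)
    (hzero : ∃ θ₀, G θ₀ =ᵐ[μ] fun _ => (0 : ℝ))
    (H₁ H₂ : Ω → ℝ) (hH₁ : MemLp H₁ 2 μ) (hH₂ : MemLp H₂ 2 μ)
    (x : ℝ) :
    |(⨅ θ : ι, ∫ ω, (H₁ ω - x - G θ ω) ^ 2 ∂μ) -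
        (⨅ θ : ι, ∫ ω, (H₂ ω - x - G θ ω) ^ 2 ∂μ)| ≤
      (2 * |x| + Real.sqrt (∫ ω, (H₁ ω) ^ 2 ∂μ) + Real.sqrt (∫ ω, (H₂ ω) ^ 2 ∂μ) +
          Real.sqrt (∫ ω, (H₁ ω - H₂ ω) ^ 2 ∂μ)) *
        Real.sqrt (∫ ω, (H₁ ω - H₂ ω) ^ 2 ∂μ) := by
  have hswap : ∫ ω, (H₂ ω - H₁ ω) ^ 2 ∂μ = ∫ ω, (H₁ ω - H₂ ω) ^ 2 ∂μ :=
    integral_congr_ae (Filter.Eventually.of_forall fun ω => by ring)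
  rw [abs_sub_le_iff]
  constructor
  · exact one_sided G hG hzero H₁ H₂ hH₁ hH₂ x
  · have h := one_sided G hG hzero H₂ H₁ hH₂ hH₁ x
    rw [hswap] at h
    calc (⨅ θ : ι, ∫ ω, (H₂ ω - x - G θ ω) ^ 2 ∂μ) -
        (⨅ θ : ι, ∫ ω, (H₁ ω - x - G θ ω) ^ 2 ∂μ) ≤ _ := h
    _ = _ := by ring
end
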